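/- A 2×2 complex unitary matrix U is skew-symmetric (Uᵀ = -U) if and only if there exists z ∈ ℂ with |z| = 1 such that U = z · !![0, -1; 1, 0], i.e., U is a unit-modulus scalar multiple of the Pauli-type gate XZ. Equivalently, combining with the skew-symmetry criterion: U satisfies ⟨ψ, Uψ⟩ = 0 for every real unit vector ψ ∈ ℂ² if and only if U = z · !![0, -1; 1, 0] for some z with |z| = 1. -/

import Mathlib

open Matrix

/-- The Pauli-type gate `XZ = !![0, -1; 1, 0]`. -/
def PXZ : Matrix (Fin 2) (Fin 2) ℂ := !![0, -1; 1, 0]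

lemma skew_iff (U : Matrix (Fin 2) (Fin 2) ℂ) (hU : U ∈ Matrix.unitaryGroup (Fin 2) ℂ) :
    (Uᵀ = -U) ↔ ∃ z : ℂ, ‖z‖ = 1 ∧ U = z • PXZ := by
  constructor
  · intro h
    have h00 : U 0 0 = 0 := by
      have := congrFun (congrFun h 0) 0
      simp [Matrix.transpose_apply] at this
      linear_combination this / 2
    have h11 : U 1 1 = 0 := by
      have := congrFun (congrFun h 1) 1
      simp [Matrix.transpose_apply] at this
      linear_combination this / 2
    have h01 : U 0 1 = - U 1 0 := by
      have := congrFun (congrFun h 1) 0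
      simpa [Matrix.transpose_apply] using this
    have hu : star U * U = 1 := hU.1
    have habs : ‖U 1 0‖ = 1 := by
      have := congrFun (congrFun hu 0) 0
      simp [Matrix.mul_apply, Fin.sum_univ_two, Matrix.conjTranspose_apply, h00] at this
      have : Complex.normSq (U 1 0) = 1 := by
        have h2 : (Complex.normSq (U 1 0) : ℂ) = 1 := by
          rw [Complex.normSq_eq_conj_mul_self]; exact this
        exact_mod_cast h2
      have := congrArg Real.sqrt this
      simpa [Complex.norm_def, Real.sqrt_one] using this
    refine ⟨U 1 0, habs, ?_⟩
    ext i j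
    fin_cases i <;> fin_cases j <;>
      simp [PXZ, h00, h11, h01]
  · rintro ⟨z, _, rfl⟩
    ext i j
    fin_cases i <;> fin_cases j <;> simp [PXZ]

theorem stmt8 (U : Matrix (Fin 2) (Fin 2) ℂ) (hU : U ∈ Matrix.unitaryGroup (Fin 2) ℂ) :
    ((Uᵀ = -U) ↔ ∃ z : ℂ, ‖z‖ = 1 ∧ U = z • PXZ) ∧
    ((∀ ψ : Fin 2 → ℂ, (∀ i, (ψ i).im = 0) → star ψ ⬝ᵥ ψ = 1 → star ψ ⬝ᵥ (U *ᵥ ψ) = 0) ↔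
      ∃ z : ℂ, ‖z‖ = 1 ∧ U = z • PXZ) := by
  refine ⟨skew_iff U hU, ?_⟩
  rw [← skew_iff U hU]
  constructor
  · intro h
    have h0 := h ![1, 0] (by intro i; fin_cases i <;> simp) (by
      simp [dotProduct, Fin.sum_univ_two])
    have h1 := h ![0, 1] (by intro i; fin_cases i <;> simp) (by
      simp [dotProduct, Fin.sum_univ_two])
    have h2 := h ![(Real.sqrt 2)⁻¹, (Real.sqrt 2)⁻¹]
      (by intro i; fin_cases i <;> simp)
      (by
        have h2 : ((Real.sqrt 2 : ℂ))⁻¹ * ((Real.sqrt 2 : ℂ))⁻¹ = 2⁻¹ := by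
          rw [← Complex.ofReal_inv, ← Complex.ofReal_mul, ← mul_inv,
            Real.mul_self_sqrt (by norm_num)]
          norm_num
        simp [dotProduct, Fin.sum_univ_two, ← Complex.ofReal_inv]
        rw [Complex.ofReal_inv]
        linear_combination (2:ℂ) * h2)
    simp [dotProduct, Fin.sum_univ_two, Matrix.mulVec, mulVec, dotProduct] at h0 h1 h2
    have hs : ((Real.sqrt 2 : ℂ))⁻¹ ≠ 0 := by
      simp [Real.sqrt_eq_zero']
    rw [h0, h1] at h2
    have h01 : U 0 1 + U 1 0 = 0 := by
      field_simp at h2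
      linear_combination h2
    ext i j
    fin_cases i <;> fin_cases j <;>
      simp [Matrix.transpose_apply, h0, h1] <;> linear_combination h01
  · intro h ψ hreal _
    have hc : ∀ i, (starRingEnd ℂ) (ψ i) = ψ i := fun i =>
      Complex.conj_eq_iff_im.2 (hreal i)
    have h01 : U 0 1 = - U 1 0 := by
      have := congrFun (congrFun h 1) 0
      simpa [Matrix.transpose_apply] using this
    have h00 : U 0 0 = 0 := by
      have := congrFun (congrFun h 0) 0
      simp [Matrix.transpose_apply] at this
      linear_combination this / 2
    have h11 : U 1 1 = 0 := by
      have := congrFun (congrFun h 1) 1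
      simp [Matrix.transpose_apply] at this
      linear_combination this / 2
    simp [dotProduct, Fin.sum_univ_two, Matrix.mulVec, dotProduct, hc, h00, h11, h01]
    ring
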